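/- For every n ≥ 1 there exists a bijection φ from the set of 132-avoiding permutations of [n] onto itself such that Des(φ(p)) = α(Des(p)) for every 132-avoiding permutation p, where α denotes reverse complementation of subsets of [n−1]. In particular, the poset of 132-avoiding permutations of [n] ordered by containment of descent sets is self-dual: for all 132-avoiding p, q one has Des(p) ⊆ Des(q) if and only if Des(φ(q)) ⊆ Des(φ(p)). -/

import Mathlib

namespace Stmt6

/-- 132-avoidance for a list of naturals. -/
def AvL (w : List ℕ) : Prop :=
  ∀ a b c : ℕ, a < b → b < c → c < w.length →
    ¬ (w.getD a 0 < w.getD c 0 ∧ w.getD c 0 < w.getD b 0)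

/-- Descent set of a list. -/
def DesL (w : List ℕ) : Set ℕ :=
  {i | 1 ≤ i ∧ i < w.length ∧ w.getD i 0 < w.getD (i-1) 0}

/-- `w` is a (0-based) standard permutation list. -/
def StdL (w : List ℕ) : Prop := w.Perm (List.range w.length)

def phiAux : ℕ → List ℕ → List ℕ
  | 0, _ => []
  | (f+1), w =>
    if w.length = 0 then [] else
      let n := w.length
      let k := min (List.idxOf (n-1) w) (n-1)
      let r := n - 1 - k
      ((phiAux f (w.drop (k+1))).map (· + k)) ++ (n-1) :: phiAux f ((w.take k).map (· - r))

def phiL (w : List ℕ) : List ℕ := phiAux w.length w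

lemma phiAux_nil (g : ℕ) : phiAux g [] = [] := by
  cases g <;> simp [phiAux]

lemma phiAux_fuel : ∀ f g w, w.length ≤ f → w.length ≤ g → phiAux f w = phiAux g w := by
  intro f
  induction f with
  | zero =>
    intro g w hf _
    have : w = [] := List.length_eq_zero_iff.mp (Nat.le_zero.mp hf)
    subst this; simp [phiAux, phiAux_nil]
  | succ f ih =>
    intro g w hf hg
    match g with
    | 0 =>
      have : w = [] := List.length_eq_zero_iff.mp (Nat.le_zero.mp hg)
      subst this; simp [phiAux, phiAux_nil]
    | g + 1 =>
      by_cases h0 : w.length = 0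
      · simp [phiAux, h0]
      · simp only [phiAux, h0, if_false]
        have hk : min (List.idxOf (w.length-1) w) (w.length-1) ≤ w.length - 1 :=
          min_le_right _ _
        have hdrop : (w.drop (min (List.idxOf (w.length-1) w) (w.length-1) + 1)).length ≤ f := by
          simp only [List.length_drop]; omega
        have hdrop' : (w.drop (min (List.idxOf (w.length-1) w) (w.length-1) + 1)).length ≤ g := by
          simp only [List.length_drop]; omega
        have htake : ((w.take (min (List.idxOf (w.length-1) w) (w.length-1))).map
            (· - (w.length - 1 - min (List.idxOf (w.length-1) w) (w.length-1)))).length ≤ f := by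
          simp only [List.length_map, List.length_take]; omega
        have htake' : ((w.take (min (List.idxOf (w.length-1) w) (w.length-1))).map
            (· - (w.length - 1 - min (List.idxOf (w.length-1) w) (w.length-1)))).length ≤ g := by
          simp only [List.length_map, List.length_take]; omega
        rw [ih _ _ hdrop hdrop', ih _ _ htake htake']

lemma phiL_eq (w : List ℕ) (h0 : w ≠ []) :
    phiL w = ((phiL (w.drop (min (List.idxOf (w.length-1) w) (w.length-1) + 1))).map
        (· + min (List.idxOf (w.length-1) w) (w.length-1))) ++
      (w.length - 1) ::
        phiL ((w.take (min (List.idxOf (w.length-1) w) (w.length-1))).map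
          (· - (w.length - 1 - min (List.idxOf (w.length-1) w) (w.length-1)))) := by
  have hlen : w.length ≠ 0 := by simpa using h0
  obtain ⟨f, hf⟩ : ∃ f, w.length = f + 1 := ⟨w.length - 1, by omega⟩
  unfold phiL
  rw [hf]
  simp only [phiAux, ← hf, hlen, if_false]
  have hk : min (List.idxOf (w.length-1) w) (w.length-1) ≤ w.length - 1 := min_le_right _ _
  congr 2
  · exact phiAux_fuel f _ _ (by simp only [List.length_drop]; omega) le_rfl
  · exact phiAux_fuel f _ _ (by simp only [List.length_map, List.length_take]; omega) le_rfl

-- getD lemmas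
lemma getD_eq (w : List ℕ) {i : ℕ} (h : i < w.length) : w.getD i 0 = w[i] :=
  List.getD_eq_getElem w 0 h

lemma len_glue (x y : List ℕ) (m : ℕ) : (x ++ m :: y).length = x.length + y.length + 1 := by
  simp only [List.length_append, List.length_cons]; omega

lemma glue_getD (x y : List ℕ) (m : ℕ) (i : ℕ) :
    (x ++ m :: y).getD i 0 =
      if i < x.length then x.getD i 0
      else if i = x.length then m
      else y.getD (i - x.length - 1) 0 := by
  have hlen := len_glue x y m
  by_cases h1 : i < x.length
  · rw [if_pos h1, getD_eq _ (by omega), getD_eq _ h1]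
    exact List.getElem_append_left h1
  · rw [if_neg h1]
    by_cases h2 : i = x.length
    · rw [if_pos h2, getD_eq _ (by omega)]
      subst h2
      rw [List.getElem_append_right le_rfl]
      simp
    · rw [if_neg h2]
      by_cases h3 : i < x.length + y.length + 1
      · have hj : i - x.length - 1 < y.length := by omega
        rw [getD_eq _ (by omega), getD_eq _ hj, List.getElem_append_right (by omega)]
        have e : i - x.length = (i - x.length - 1) + 1 := by omega
        rw [show ((m :: y)[i - x.length]'(by simp only [List.length_cons]; omega)) =
            ((m :: y)[(i - x.length - 1) + 1]'(by simp only [List.length_cons]; omega)) by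
          congr 1 <;> omega]
        exact List.getElem_cons_succ ..
      · rw [List.getD_eq_default _ _ (by omega), List.getD_eq_default _ _ (by omega)]

lemma getD_take (w : List ℕ) (k : ℕ) {i : ℕ} (h : i < (w.take k).length) :
    (w.take k).getD i 0 = w.getD i 0 := by
  have h' : i < w.length := by simp only [List.length_take] at h; omega
  rw [getD_eq _ h, getD_eq _ h']
  exact List.getElem_take

lemma getD_drop (w : List ℕ) (k : ℕ) {i : ℕ} (h : i < (w.drop k).length) :
    (w.drop k).getD i 0 = w.getD (k + i) 0 := by
  have h' : k + i < w.length := by simp only [List.length_drop] at h; omega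
  rw [getD_eq _ h, getD_eq _ h']
  exact List.getElem_drop

lemma getD_map (w : List ℕ) (f : ℕ → ℕ) {i : ℕ} (h : i < w.length) :
    (w.map f).getD i 0 = f (w.getD i 0) := by
  rw [getD_eq _ (by simpa using h), getD_eq _ h]
  exact List.getElem_map f

lemma getD_mem (w : List ℕ) {i : ℕ} (h : i < w.length) : w.getD i 0 ∈ w := by
  rw [getD_eq _ h]; exact List.getElem_mem _

lemma avl_take (w : List ℕ) (k : ℕ) (h : AvL w) : AvL (w.take k) := by
  intro a b c hab hbc hc
  rw [getD_take (i := a) _ _ (by omega), getD_take (i := b) _ _ (by omega),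
    getD_take (i := c) _ _ hc]
  have : c < w.length := by simp only [List.length_take] at hc; omega
  exact h a b c hab hbc this

lemma avl_drop (w : List ℕ) (k : ℕ) (h : AvL w) : AvL (w.drop k) := by
  intro a b c hab hbc hc
  rw [getD_drop (i := a) _ _ (by omega), getD_drop (i := b) _ _ (by omega),
    getD_drop (i := c) _ _ hc]
  have : k + c < w.length := by simp only [List.length_drop] at hc; omega
  exact h (k+a) (k+b) (k+c) (by omega) (by omega) this

lemma avl_map {w : List ℕ} {f : ℕ → ℕ} (h : AvL w)
    (hf : ∀ a ∈ w, ∀ b ∈ w, (f a < f b ↔ a < b)) : AvL (w.map f) := by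
  intro a b c hab hbc hc
  have hc' : c < w.length := by simpa using hc
  rw [getD_map (i := a) _ _ (by omega), getD_map (i := b) _ _ (by omega),
    getD_map (i := c) _ _ hc']
  intro ⟨h1, h2⟩
  rw [hf _ (getD_mem _ (by omega)) _ (getD_mem _ (by omega))] at h1
  rw [hf _ (getD_mem _ (by omega)) _ (getD_mem _ (by omega))] at h2
  exact h a b c hab hbc hc' ⟨h1, h2⟩

lemma desL_map {w : List ℕ} {f : ℕ → ℕ}
    (hf : ∀ a ∈ w, ∀ b ∈ w, (f a < f b ↔ a < b)) : DesL (w.map f) = DesL w := by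
  ext i
  simp only [DesL, Set.mem_setOf_eq, List.length_map]
  constructor
  · rintro ⟨h1, h2, hd⟩
    refine ⟨h1, h2, ?_⟩
    rw [getD_map (i := i) _ _ (by omega), getD_map (i := i-1) _ _ (by omega)] at hd
    rwa [hf _ (getD_mem _ (by omega)) _ (getD_mem _ (by omega))] at hd
  · rintro ⟨h1, h2, hd⟩
    refine ⟨h1, h2, ?_⟩
    rw [getD_map (i := i) _ _ (by omega), getD_map (i := i-1) _ _ (by omega)]
    rwa [hf _ (getD_mem _ (by omega)) _ (getD_mem _ (by omega))]

lemma avl_glue {x y : List ℕ} {m : ℕ} (hx : AvL x) (hy : AvL y)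
    (hxy : ∀ u ∈ x, ∀ v ∈ y, v < u)
    (hmx : ∀ u ∈ x, u < m) (hmy : ∀ v ∈ y, v < m) :
    AvL (x ++ m :: y) := by
  intro a b c hab hbc hc
  rw [len_glue] at hc
  rw [glue_getD, glue_getD, glue_getD]
  split_ifs <;>
    first
      | exact hx a b c hab hbc (by omega)
      | exact hy (a - x.length - 1) (b - x.length - 1) (c - x.length - 1)
          (by omega) (by omega) (by omega)
      | (intro ⟨h1', h2'⟩; revert h1' h2'; intro h1' h2'
         first
           | exact absurd h2' (not_lt.mpr (le_of_lt (hmx _ (getD_mem _ (by omega)))))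
           | exact absurd h1' (not_lt.mpr (le_of_lt (hmy _ (getD_mem _ (by omega)))))
           | exact absurd h1' (not_lt.mpr (le_of_lt (hxy _ (getD_mem _ (by omega)) _
               (getD_mem _ (by omega)))))
           | omega)
      | omega

lemma desL_glue {x y : List ℕ} {m : ℕ}
    (hmx : ∀ u ∈ x, u < m) (hmy : ∀ v ∈ y, v < m) (i : ℕ) :
    i ∈ DesL (x ++ m :: y) ↔
      i ∈ DesL x ∨ (i = x.length + 1 ∧ y ≠ []) ∨ ∃ j ∈ DesL y, i = x.length + 1 + j := by
  have hlen := len_glue x y m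
  have hynil : y ≠ [] ↔ 1 ≤ y.length :=
    ⟨fun h => List.length_pos_iff.mpr h, fun h => List.length_pos_iff.mp h⟩
  simp only [DesL, Set.mem_setOf_eq]
  rw [hlen, glue_getD, glue_getD]
  constructor
  · rintro ⟨h1, h2, hd⟩
    split_ifs at hd <;>
      first
        | omega
        | exact Or.inl ⟨h1, by omega, hd⟩
        | exact absurd hd (not_lt.mpr (le_of_lt (hmx _ (getD_mem _ (by omega)))))
        | exact absurd hd (not_lt.mpr (le_of_lt (hmy _ (getD_mem _ (by omega)))))
        | exact Or.inr (Or.inl ⟨by omega, hynil.mpr (by omega)⟩)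
        | (refine Or.inr (Or.inr ⟨i - x.length - 1, ⟨by omega, by omega, ?_⟩, by omega⟩);
           convert hd using 2 <;> omega)
  · rintro (⟨h1, h2, hd⟩ | ⟨rfl, hnil⟩ | ⟨j, ⟨hj1, hj2, hjd⟩, rfl⟩)
    · refine ⟨h1, by omega, ?_⟩
      split_ifs <;> first | exact hd | omega
    · rw [hynil] at hnil
      refine ⟨by omega, by omega, ?_⟩
      split_ifs <;>
        first
          | (convert hmy _ (getD_mem _ (show x.length + 1 - x.length - 1 < y.length by omega))
              using 2 <;> omega)
          | omega
    · refine ⟨by omega, by omega, ?_⟩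
      split_ifs <;> first | omega | (convert hjd using 2 <;> omega)

lemma toFinset_range (n : ℕ) : (List.range n).toFinset = Finset.range n := by
  ext x; simp

lemma stdL_of {w : List ℕ} (hn : w.Nodup) (hlt : ∀ x ∈ w, x < w.length) : StdL w := by
  apply List.perm_of_nodup_nodup_toFinset_eq hn (List.nodup_range)
  rw [toFinset_range]
  apply Finset.eq_of_subset_of_card_le
  · intro x hx
    rw [List.mem_toFinset] at hx
    exact Finset.mem_range.mpr (hlt x hx)
  · rw [Finset.card_range, List.toFinset_card_of_nodup hn]

lemma stdL_nodup {w : List ℕ} (h : StdL w) : w.Nodup :=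
  List.Perm.nodup (List.Perm.symm h) (List.nodup_range)

lemma stdL_mem {w : List ℕ} (h : StdL w) {x : ℕ} : x ∈ w ↔ x < w.length := by
  rw [List.Perm.mem_iff h, List.mem_range]

lemma perm_glue_range (a b : ℕ) (A B : List ℕ)
    (hA : A.Perm ((List.range b).map (· + a))) (hB : B.Perm (List.range a)) :
    (A ++ (a+b) :: B).Perm (List.range (a+b+1)) := by
  have s1 : (A ++ (a+b) :: B).Perm
      (((List.range b).map (· + a)) ++ (a+b) :: List.range a) := hA.append (hB.cons _)
  have s2 : (((List.range b).map (· + a)) ++ (a+b) :: List.range a).Perm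
      ((a+b) :: (((List.range b).map (· + a)) ++ List.range a)) := List.perm_middle
  have s3 : ((a+b) :: (((List.range b).map (· + a)) ++ List.range a)).Perm
      ((a+b) :: (List.range a ++ (List.range b).map (· + a))) :=
    (List.perm_append_comm).cons _
  have s4 : ((a+b) :: (List.range a ++ (List.range b).map (· + a))).Perm
      ((List.range a ++ (List.range b).map (· + a)) ++ [a+b]) :=
    (List.perm_append_singleton _ _).symm
  have e : List.range (a+b+1) = (List.range a ++ (List.range b).map (· + a)) ++ [a+b] := by
    rw [show a+b+1 = (a+b).succ from rfl, List.range_succ, List.range_add]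
    congr 2
    exact List.map_congr_left (fun x _ => Nat.add_comm a x)
  rw [e]
  exact ((s1.trans s2).trans s3).trans s4

/-- Structural decomposition of a nonempty 132-avoiding standard permutation list. -/
lemma decomp {w : List ℕ} (hstd : StdL w) (havl : AvL w) (h0 : w ≠ []) :
    List.idxOf (w.length-1) w < w.length ∧
    (∀ x ∈ w.take (List.idxOf (w.length-1) w),
        (w.length - 1 - List.idxOf (w.length-1) w) ≤ x ∧ x < w.length - 1) ∧
    (∀ y ∈ w.drop (List.idxOf (w.length-1) w + 1),
        y < w.length - 1 - List.idxOf (w.length-1) w) ∧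
    StdL (w.drop (List.idxOf (w.length-1) w + 1)) ∧
    AvL (w.drop (List.idxOf (w.length-1) w + 1)) ∧
    StdL ((w.take (List.idxOf (w.length-1) w)).map
      (· - (w.length - 1 - List.idxOf (w.length-1) w))) ∧
    AvL ((w.take (List.idxOf (w.length-1) w)).map
      (· - (w.length - 1 - List.idxOf (w.length-1) w))) ∧
    w = w.take (List.idxOf (w.length-1) w) ++
        (w.length - 1) :: w.drop (List.idxOf (w.length-1) w + 1) := by
  set n := w.length with hn
  set k := List.idxOf (n-1) w with hkdef
  set r := n - 1 - k with hrdef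
  have hn1 : 1 ≤ n := List.length_pos_iff.mpr h0
  have hmem : n - 1 ∈ w := (stdL_mem hstd).mpr (by omega)
  have hk : k < n := List.idxOf_lt_length_iff.mpr hmem
  have hnd : w.Nodup := stdL_nodup hstd
  have hwk : w.getD k 0 = n - 1 := by
    rw [getD_eq _ hk]; exact List.getElem_idxOf hk
  have hinj : ∀ i j : ℕ, i < n → j < n → w.getD i 0 = w.getD j 0 → i = j := by
    intro i j hi hj hij
    rw [getD_eq _ hi, getD_eq _ hj] at hij
    exact (List.Nodup.getElem_inj_iff hnd).mp hij
  have hLlen : (w.take k).length = k := by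
    rw [List.length_take]; omega
  have hRlen : (w.drop (k+1)).length = r := by
    rw [List.length_drop]; omega
  have hglue : w = w.take k ++ (n-1) :: w.drop (k+1) := by
    conv_lhs => rw [← List.take_append_drop k w]
    rw [List.drop_eq_getElem_cons hk]
    rw [show w[k]'hk = n - 1 from List.getElem_idxOf hk]
  have hlt : ∀ x ∈ w, x < n := fun x hx => (stdL_mem hstd).mp hx
  have hne : ∀ i : ℕ, i < n → i ≠ k → w.getD i 0 ≠ n - 1 := by
    intro i hi hik hcon
    exact hik (hinj i k hi hk (hcon.trans hwk.symm))
  have hmemL : ∀ x, x ∈ w.take k ↔ ∃ i, i < k ∧ w.getD i 0 = x := by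
    intro x
    rw [List.mem_take_iff_getElem]
    constructor
    · rintro ⟨i, hi, hx⟩
      exact ⟨i, by omega, by rw [getD_eq _ (by omega : i < w.length), ← hx]⟩
    · rintro ⟨i, hi, hx⟩
      refine ⟨i, by omega, ?_⟩
      rw [← hx]
      exact (getD_eq _ (by omega : i < w.length)).symm
  have hmemR : ∀ y, y ∈ w.drop (k+1) ↔ ∃ j, j < r ∧ w.getD (k+1+j) 0 = y := by
    intro y
    rw [List.mem_iff_getElem]
    constructor
    · rintro ⟨j, hj, hy⟩
      rw [hRlen] at hj
      refine ⟨j, hj, ?_⟩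
      rw [getD_eq _ (by omega : k+1+j < w.length), ← hy]
      exact (List.getElem_drop).symm
    · rintro ⟨j, hj, hy⟩
      refine ⟨j, by omega, ?_⟩
      rw [← hy, getD_eq _ (by omega : k+1+j < w.length)]
      exact List.getElem_drop
  have hLR : ∀ x ∈ w.take k, ∀ y ∈ w.drop (k+1), y < x := by
    intro x hx y hy
    obtain ⟨i, hi, rfl⟩ := (hmemL x).mp hx
    obtain ⟨j, hj, rfl⟩ := (hmemR y).mp hy
    have hav := havl i k (k+1+j) (by omega) (by omega) (by omega)
    rw [hwk] at hav
    have hmemy : w.getD (k+1+j) 0 ∈ w := getD_mem _ (by omega)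
    have h1 : w.getD (k+1+j) 0 < n - 1 := by
      have := hne (k+1+j) (by omega) (by omega)
      have := hlt _ hmemy
      omega
    have h2 : w.getD i 0 ≠ w.getD (k+1+j) 0 := by
      intro hcon
      have := hinj i (k+1+j) (by omega) (by omega) hcon
      omega
    have h3 : ¬ (w.getD i 0 < w.getD (k+1+j) 0) := fun hcon => hav ⟨hcon, h1⟩
    omega
  have hndL : (w.take k).Nodup := (List.take_sublist _ _).nodup hnd
  have hndR : (w.drop (k+1)).Nodup := (List.drop_sublist _ _).nodup hnd
  have hLlt : ∀ x ∈ w.take k, x < n - 1 := by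
    intro x hx
    obtain ⟨i, hi, rfl⟩ := (hmemL x).mp hx
    have := hne i (by omega) (by omega)
    have := hlt _ (getD_mem _ (by omega : i < w.length))
    omega
  have hRlt2 : ∀ y ∈ w.drop (k+1), y < n - 1 := by
    intro y hy
    obtain ⟨j, hj, rfl⟩ := (hmemR y).mp hy
    have := hne (k+1+j) (by omega) (by omega)
    have := hlt _ (getD_mem _ (by omega : k+1+j < w.length))
    omega
  have hRsmall : ∀ y ∈ w.drop (k+1), y < r := by
    intro y hy
    by_contra hcon
    push_neg at hcon
    have hsub : (w.take k).toFinset ⊆ Finset.Ioo y (n-1) := by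
      intro x hx
      rw [List.mem_toFinset] at hx
      exact Finset.mem_Ioo.mpr ⟨hLR x hx y hy, hLlt x hx⟩
    have hcard := Finset.card_le_card hsub
    rw [List.toFinset_card_of_nodup hndL, hLlen, Nat.card_Ioo] at hcard
    have := hRlt2 y hy
    omega
  have hLbig : ∀ x ∈ w.take k, r ≤ x ∧ x < n - 1 := by
    intro x hx
    refine ⟨?_, hLlt x hx⟩
    have hsub : (w.drop (k+1)).toFinset ⊆ Finset.range x := by
      intro y hy
      rw [List.mem_toFinset] at hy
      exact Finset.mem_range.mpr (hLR x hx y hy)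
    have hcard := Finset.card_le_card hsub
    rw [List.toFinset_card_of_nodup hndR, hRlen, Finset.card_range] at hcard
    omega
  have hstdR : StdL (w.drop (k+1)) := by
    apply stdL_of hndR
    intro y hy
    rw [hRlen]
    exact hRsmall y hy
  have hstdL' : StdL ((w.take k).map (· - r)) := by
    apply stdL_of
    · apply hndL.map_on
      intro a ha b hb hab
      have := (hLbig a ha).1
      have := (hLbig b hb).1
      omega
    · intro x hx
      rw [List.length_map, hLlen]
      rw [List.mem_map] at hx
      obtain ⟨a, ha, rfl⟩ := hx
      have := hLbig a ha
      omega
  have havlR : AvL (w.drop (k+1)) := avl_drop w (k+1) havl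
  have havlL' : AvL ((w.take k).map (· - r)) := by
    apply avl_map (avl_take w k havl)
    intro a ha b hb
    have := (hLbig a ha).1
    have := (hLbig b hb).1
    omega
  exact ⟨hk, hLbig, hRsmall, hstdR, havlR, hstdL', havlL', hglue⟩

/-- The descent-set reverse-complement computation, abstractly. -/
lemma des_alpha (n k r : ℕ) (hkr : k + r + 1 = n)
    (S1 S2 T1 T2 W T : Set ℕ)
    (hS1 : ∀ j ∈ S1, 1 ≤ j ∧ j < k) (hS2 : ∀ j ∈ S2, 1 ≤ j ∧ j < r)
    (hT2 : ∀ i, i ∈ T2 ↔ 1 ≤ i ∧ i ≤ r - 1 ∧ r - i ∉ S2)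
    (hT1 : ∀ i, i ∈ T1 ↔ 1 ≤ i ∧ i ≤ k - 1 ∧ k - i ∉ S1)
    (hW : ∀ i, i ∈ W ↔ i ∈ S1 ∨ (i = k + 1 ∧ 1 ≤ r) ∨ ∃ j ∈ S2, i = k + 1 + j)
    (hT : ∀ i, i ∈ T ↔ i ∈ T2 ∨ (i = r + 1 ∧ 1 ≤ k) ∨ ∃ j ∈ T1, i = r + 1 + j) :
    ∀ i, i ∈ T ↔ 1 ≤ i ∧ i ≤ n - 1 ∧ n - i ∉ W := by
  intro i
  rw [hT]
  constructor
  · rintro (h | ⟨rfl, hk1⟩ | ⟨j, hj, rfl⟩)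
    · obtain ⟨h1, h2, h3⟩ := (hT2 i).mp h
      refine ⟨h1, by omega, ?_⟩
      rw [hW]
      rintro (hc | ⟨hc, _⟩ | ⟨j, hjm, hje⟩)
      · have := hS1 _ hc; omega
      · omega
      · have hb := hS2 _ hjm
        have : j = r - i := by omega
        subst this
        exact h3 hjm
    · refine ⟨by omega, by omega, ?_⟩
      rw [hW]
      rintro (hc | ⟨hc, _⟩ | ⟨j, hjm, hje⟩)
      · have := hS1 _ hc; omega
      · omega
      · have := hS2 _ hjm; omega
    · obtain ⟨h1, h2, h3⟩ := (hT1 j).mp hj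
      refine ⟨by omega, by omega, ?_⟩
      rw [hW]
      rintro (hc | ⟨hc, _⟩ | ⟨j', hjm, hje⟩)
      · have he : n - (r + 1 + j) = k - j := by omega
        rw [he] at hc
        exact h3 hc
      · have := hS1; omega
      · have := hS2 _ hjm; omega
  · rintro ⟨h1, h2, hnw⟩
    by_cases hir : i < r
    · refine Or.inl ((hT2 i).mpr ⟨h1, by omega, fun hc => ?_⟩)
      exact hnw ((hW _).mpr (Or.inr (Or.inr ⟨r - i, hc, by omega⟩)))
    · by_cases hir2 : i = r
      · exact absurd ((hW _).mpr (Or.inr (Or.inl ⟨by omega, by omega⟩))) hnw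
      · by_cases hir3 : i = r + 1
        · exact Or.inr (Or.inl ⟨hir3, by omega⟩)
        · refine Or.inr (Or.inr ⟨i - r - 1, (hT1 _).mpr ⟨by omega, by omega, fun hc => ?_⟩,
            by omega⟩)
          have he : n - i = k - (i - r - 1) := by omega
          rw [← he] at hc
          exact hnw ((hW _).mpr (Or.inl hc))

lemma phiL_nil : phiL [] = [] := rfl

lemma base_case :
    StdL (phiL []) ∧ AvL (phiL []) ∧ (phiL []).length = ([] : List ℕ).length ∧
    (∀ i, i ∈ DesL (phiL []) ↔
      (1 ≤ i ∧ i ≤ ([] : List ℕ).length - 1 ∧ ([] : List ℕ).length - i ∉ DesL ([] : List ℕ))) ∧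
    phiL (phiL []) = ([] : List ℕ) := by
  rw [phiL_nil]
  refine ⟨by simp [StdL], fun a b c _ _ hc => by simp at hc, rfl, fun i => ?_, rfl⟩
  simp only [DesL, Set.mem_setOf_eq, List.length_nil]
  constructor
  · rintro ⟨_, h, _⟩; omega
  · rintro ⟨h1, h2, _⟩; omega

lemma phi_main : ∀ f (w : List ℕ), w.length ≤ f → StdL w → AvL w →
    StdL (phiL w) ∧ AvL (phiL w) ∧ (phiL w).length = w.length ∧
    (∀ i, i ∈ DesL (phiL w) ↔ (1 ≤ i ∧ i ≤ w.length - 1 ∧ w.length - i ∉ DesL w)) ∧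
    phiL (phiL w) = w := by
  intro f
  induction f with
  | zero =>
    intro w hf _ _
    have : w = [] := List.length_eq_zero_iff.mp (Nat.le_zero.mp hf)
    subst this
    exact base_case
  | succ f ih =>
    intro w hf hstd havl
    by_cases h0 : w = []
    · subst h0; exact base_case
    obtain ⟨hk, hLbig, hRsmall, hstdR, havlR, hstdL', havlL', hglue⟩ := decomp hstd havl h0
    have hphi := phiL_eq w h0
    set n := w.length with hn
    set k := List.idxOf (n-1) w with hkdef
    set r := n - 1 - k with hrdef
    have hn1 : 1 ≤ n := List.length_pos_iff.mpr h0
    have hkn1 : k ≤ n - 1 := by omega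
    have hkr : k + r + 1 = n := by omega
    rw [min_eq_left hkn1] at hphi
    set L := w.take k with hLdef
    set R := w.drop (k+1) with hRdef
    set L' := L.map (· - r) with hL'def
    have hLlen : L.length = k := by rw [hLdef, List.length_take]; omega
    have hRlen : R.length = r := by rw [hRdef, List.length_drop]; omega
    have hL'len : L'.length = k := by rw [hL'def, List.length_map, hLlen]
    -- inductive hypotheses
    obtain ⟨ihRstd, ihRavl, ihRlen, ihRdes, ihRinv⟩ := ih R (by rw [hRlen]; omega) hstdR havlR
    obtain ⟨ihBstd, ihBavl, ihBlen, ihBdes, ihBinv⟩ := ih L' (by rw [hL'len]; omega) hstdL' havlL'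
    rw [hRlen] at ihRlen ihRdes
    rw [hL'len] at ihBlen ihBdes
    set A := (phiL R).map (· + k) with hAdef
    set B := phiL L' with hBdef
    have hAlen : A.length = r := by rw [hAdef, List.length_map, ihRlen]
    -- membership facts
    have hmemPR : ∀ v ∈ phiL R, v < r := by
      intro v hv
      have := (stdL_mem ihRstd).mp hv
      omega
    have hmemA : ∀ u ∈ A, k ≤ u ∧ u < n - 1 := by
      intro u hu
      rw [hAdef, List.mem_map] at hu
      obtain ⟨v, hv, rfl⟩ := hu
      have := hmemPR v hv
      omega
    have hmemB : ∀ v ∈ B, v < k := by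
      intro v hv
      have := (stdL_mem ihBstd).mp hv
      omega
    have hmemL : ∀ x ∈ L, r ≤ x ∧ x < n - 1 := hLbig
    have hmemR : ∀ y ∈ R, y < r := hRsmall
    -- length of phiL w
    have hlen : (phiL w).length = n := by
      rw [hphi, len_glue, hAlen, ihBlen]
      omega
    -- standardness
    have hstdP : StdL (phiL w) := by
      rw [StdL, hlen, hphi]
      have hAperm : A.Perm ((List.range r).map (· + k)) := by
        rw [hAdef]
        refine List.Perm.map _ ?_
        have := ihRstd
        rwa [StdL, ihRlen] at this
      have hBperm : B.Perm (List.range k) := by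
        have := ihBstd
        rwa [StdL, ihBlen] at this
      have := perm_glue_range k r A B hAperm hBperm
      rw [show k + r = n - 1 by omega, show n - 1 + 1 = n by omega] at this
      exact this
    -- avoidance
    have havlP : AvL (phiL w) := by
      rw [hphi]
      apply avl_glue
      · exact avl_map ihRavl (fun a _ b _ => by omega)
      · exact ihBavl
      · intro u hu v hv
        have := (hmemA u hu).1
        have := hmemB v hv
        omega
      · intro u hu; exact (hmemA u hu).2
      · intro v hv
        have := hmemB v hv
        omega
    -- descent sets
    have hWchar : ∀ i, i ∈ DesL w ↔
        i ∈ DesL L' ∨ (i = k + 1 ∧ 1 ≤ r) ∨ ∃ j ∈ DesL R, i = k + 1 + j := by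
      intro i
      have hDL : DesL L' = DesL L := by
        rw [hL'def]
        apply desL_map
        intro a ha b hb
        have := (hmemL a ha).1
        have := (hmemL b hb).1
        omega
      rw [hDL]
      conv_lhs => rw [hglue]
      rw [desL_glue (fun u hu => (hmemL u hu).2)
        (fun v hv => by have := hmemR v hv; omega) i, hLlen]
      constructor
      · rintro (h | ⟨h1, h2⟩ | h)
        · exact Or.inl h
        · refine Or.inr (Or.inl ⟨h1, ?_⟩)
          rw [← hRlen]
          exact List.length_pos_iff.mpr h2
        · exact Or.inr (Or.inr h)
      · rintro (h | ⟨h1, h2⟩ | h)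
        · exact Or.inl h
        · refine Or.inr (Or.inl ⟨h1, ?_⟩)
          rw [← List.length_pos_iff, hRlen]
          omega
        · exact Or.inr (Or.inr h)
    have hTchar : ∀ i, i ∈ DesL (phiL w) ↔
        i ∈ DesL (phiL R) ∨ (i = r + 1 ∧ 1 ≤ k) ∨ ∃ j ∈ DesL B, i = r + 1 + j := by
      intro i
      have hDA : DesL A = DesL (phiL R) := by
        rw [hAdef]
        apply desL_map
        intro a _ b _
        omega
      rw [hphi, desL_glue (fun u hu => (hmemA u hu).2)
        (fun v hv => by have := hmemB v hv; omega) i, hAlen, hDA]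
      constructor
      · rintro (h | ⟨h1, h2⟩ | h)
        · exact Or.inl h
        · refine Or.inr (Or.inl ⟨h1, ?_⟩)
          rw [← ihBlen]
          exact List.length_pos_iff.mpr h2
        · exact Or.inr (Or.inr h)
      · rintro (h | ⟨h1, h2⟩ | h)
        · exact Or.inl h
        · refine Or.inr (Or.inl ⟨h1, ?_⟩)
          rw [← List.length_pos_iff, ihBlen]
          omega
        · exact Or.inr (Or.inr h)
    have hdes : ∀ i, i ∈ DesL (phiL w) ↔ (1 ≤ i ∧ i ≤ n - 1 ∧ n - i ∉ DesL w) := by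
      apply des_alpha n k r hkr (DesL L') (DesL R) (DesL B) (DesL (phiL R))
      · intro j hj
        obtain ⟨h1, h2, _⟩ := hj
        rw [hL'len] at h2
        exact ⟨h1, h2⟩
      · intro j hj
        obtain ⟨h1, h2, _⟩ := hj
        rw [hRlen] at h2
        exact ⟨h1, h2⟩
      · exact ihRdes
      · exact ihBdes
      · exact hWchar
      · exact hTchar
    -- involution
    have hinv : phiL (phiL w) = w := by
      have hPne : phiL w ≠ [] := by
        intro hc
        rw [hc] at hlen
        simp at hlen
        omega
      have hnA : n - 1 ∉ A := fun hc => by have := hmemA _ hc; omega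
      have hidx : List.idxOf ((phiL w).length - 1) (phiL w) = r := by
        rw [hlen, hphi, List.idxOf_append_of_notMem hnA, hAlen, List.idxOf_cons_self]
        omega
      have heq2 := phiL_eq (phiL w) hPne
      rw [hidx, hlen, min_eq_left (by omega : r ≤ n - 1)] at heq2
      have htake : (phiL w).take r = A := by
        rw [hphi]
        exact List.take_left' hAlen
      have hdrop : (phiL w).drop (r+1) = B := by
        rw [hphi, List.append_cons]
        apply List.drop_left'
        rw [List.length_append, hAlen, List.length_singleton]
      rw [htake, hdrop, show n - 1 - r = k by omega] at heq2
      have hBmap : phiL B = L' := ihBinv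
      have hAmap : A.map (· - k) = phiL R := by
        rw [hAdef, List.map_map]
        have : ((fun x => x - k) ∘ (fun x => x + k)) = id := by
          funext x
          simp
        rw [this, List.map_id]
      rw [hBmap, hAmap, ihRinv] at heq2
      have hLmap : L'.map (· + r) = L := by
        rw [hL'def, List.map_map]
        have he : L.map ((fun x => x + r) ∘ (fun x => x - r)) = L.map id := by
          apply List.map_congr_left
          intro x hx
          have := (hmemL x hx).1
          simp only [Function.comp_apply, id_eq]
          omega
        rw [he, List.map_id]
      rw [hLmap] at heq2
      rw [heq2, ← hglue]
    exact ⟨hstdP, havlP, hlen, hdes, hinv⟩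

lemma nodup_getD_inj {w : List ℕ} (h : w.Nodup) {i j : ℕ} (hi : i < w.length)
    (hj : j < w.length) (he : w.getD i 0 = w.getD j 0) : i = j := by
  rw [getD_eq _ hi, getD_eq _ hj] at he
  exact (List.Nodup.getElem_inj_iff h).mp he

end Stmt6

/-- A permutation `p` of `[n]` (0-based `Fin n`) is 132-avoiding if there are
no positions `a < b < c` with `p a < p c < p b`. -/
def Avoids132 {n : ℕ} (p : Equiv.Perm (Fin n)) : Prop :=
  ∀ a b c : Fin n, a < b → b < c → ¬ (p a < p c ∧ p c < p b)

/-- The descent set of `p`, as a set of 1-based positions `i ∈ [n-1]`: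
`i` is a descent iff `p(i) > p(i+1)`, i.e. (0-based) `p ⟨i-1⟩ > p ⟨i⟩`. -/
def Des {n : ℕ} (p : Equiv.Perm (Fin n)) : Set ℕ :=
  {i | ∃ h : 1 ≤ i ∧ i < n,
        p ⟨i, h.2⟩ < p ⟨i - 1, Nat.lt_of_le_of_lt (Nat.sub_le i 1) h.2⟩}

/-- The reverse complement `α(S) = {i ∈ [n-1] : n - i ∉ S}` of `S ⊆ [n-1]`. -/
def revCompl (n : ℕ) (S : Set ℕ) : Set ℕ :=
  {i | 1 ≤ i ∧ i ≤ n - 1 ∧ n - i ∉ S}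

namespace Stmt6

variable {n : ℕ}

def toL (p : Equiv.Perm (Fin n)) : List ℕ := List.ofFn (fun i => (p i : ℕ))

lemma toL_length (p : Equiv.Perm (Fin n)) : (toL p).length = n := by simp [toL]

lemma toL_getD (p : Equiv.Perm (Fin n)) {i : ℕ} (h : i < n) :
    (toL p).getD i 0 = (p ⟨i, h⟩ : ℕ) := by
  rw [getD_eq _ (by rw [toL_length]; exact h)]
  exact List.getElem_ofFn _

lemma toL_std (p : Equiv.Perm (Fin n)) : StdL (toL p) := by
  apply stdL_of
  · rw [toL, List.nodup_ofFn]
    exact fun i j hij => p.injective (Fin.ext hij)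
  · intro x hx
    rw [toL, List.mem_ofFn] at hx
    obtain ⟨i, rfl⟩ := hx
    rw [toL_length]
    exact (p i).isLt

lemma toL_avl (p : Equiv.Perm (Fin n)) : Avoids132 p ↔ AvL (toL p) := by
  constructor
  · intro hp a b c hab hbc hc
    rw [toL_length] at hc
    rw [toL_getD (i := a) p (by omega), toL_getD (i := b) p (by omega),
      toL_getD (i := c) p hc]
    intro ⟨h1, h2⟩
    exact hp ⟨a, by omega⟩ ⟨b, by omega⟩ ⟨c, hc⟩ hab hbc
      ⟨Fin.lt_def.mpr h1, Fin.lt_def.mpr h2⟩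
  · intro hL a b c hab hbc
    intro ⟨h1, h2⟩
    have := hL a b c hab hbc (by rw [toL_length]; exact c.isLt)
    rw [toL_getD (i := (a:ℕ)) p (by omega), toL_getD (i := (b:ℕ)) p (by omega),
      toL_getD (i := (c:ℕ)) p c.isLt] at this
    exact this ⟨by simpa using Fin.lt_def.mp h1, by simpa using Fin.lt_def.mp h2⟩

lemma toL_des (p : Equiv.Perm (Fin n)) : Des p = DesL (toL p) := by
  ext i
  simp only [Des, DesL, Set.mem_setOf_eq, toL_length]
  constructor
  · rintro ⟨⟨h1, h2⟩, hd⟩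
    refine ⟨h1, h2, ?_⟩
    rw [toL_getD (i := i) p h2, toL_getD (i := i-1) p (by omega)]
    exact Fin.lt_def.mp hd
  · rintro ⟨h1, h2, hd⟩
    refine ⟨⟨h1, h2⟩, ?_⟩
    rw [toL_getD (i := i) p h2, toL_getD (i := i-1) p (by omega)] at hd
    exact Fin.lt_def.mpr hd

lemma toL_inj {p q : Equiv.Perm (Fin n)} (h : toL p = toL q) : p = q := by
  apply Equiv.ext
  intro i
  apply Fin.ext
  have h1 := toL_getD p i.isLt
  have h2 := toL_getD q i.isLt
  rw [h] at h1
  rw [← h1, h2]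

noncomputable def permOf (w : List ℕ) (hstd : StdL w) (hlen : w.length = n) : Equiv.Perm (Fin n) :=
  Equiv.ofBijective
    (fun i => (⟨w.getD i 0, by
      have := (stdL_mem hstd).mp (getD_mem w (by rw [hlen]; exact i.isLt))
      omega⟩ : Fin n))
    (Finite.injective_iff_bijective.mp (fun i j hij => by
      apply Fin.ext
      exact nodup_getD_inj (stdL_nodup hstd) (by rw [hlen]; exact i.isLt)
        (by rw [hlen]; exact j.isLt) (congrArg Fin.val hij)))

lemma toL_permOf (w : List ℕ) (hstd : StdL w) (hlen : w.length = n) :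
    toL (permOf w hstd hlen) = w := by
  apply List.ext_getElem
  · rw [toL_length, hlen]
  · intro i h1 h2
    rw [toL_length] at h1
    have : (toL (permOf w hstd hlen)).getD i 0 = w.getD i 0 := by
      rw [toL_getD _ h1]
      rfl
    rw [getD_eq _ (by rw [toL_length]; exact h1), getD_eq _ h2] at this
    exact this

lemma phiMain (p : {p : Equiv.Perm (Fin n) // Avoids132 p}) :
    StdL (phiL (toL p.1)) ∧ AvL (phiL (toL p.1)) ∧
    (phiL (toL p.1)).length = (toL p.1).length ∧
    (∀ i, i ∈ DesL (phiL (toL p.1)) ↔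
      (1 ≤ i ∧ i ≤ (toL p.1).length - 1 ∧ (toL p.1).length - i ∉ DesL (toL p.1))) ∧
    phiL (phiL (toL p.1)) = toL p.1 :=
  phi_main _ _ le_rfl (toL_std p.1) ((toL_avl p.1).mp p.2)

lemma phiLen (p : {p : Equiv.Perm (Fin n) // Avoids132 p}) :
    (phiL (toL p.1)).length = n := by
  rw [(phiMain p).2.2.1, toL_length]

/-- The bijection on 132-avoiding permutations, built from `phiL`. -/
noncomputable def Phi (p : {p : Equiv.Perm (Fin n) // Avoids132 p}) :
    {p : Equiv.Perm (Fin n) // Avoids132 p} :=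
  ⟨permOf (phiL (toL p.1)) (phiMain p).1 (phiLen p), by
    rw [toL_avl, toL_permOf]
    exact (phiMain p).2.1⟩

lemma toL_Phi (p : {p : Equiv.Perm (Fin n) // Avoids132 p}) :
    toL (Phi p).1 = phiL (toL p.1) := toL_permOf _ (phiMain p).1 (phiLen p)

lemma Phi_involutive : Function.Involutive (Phi (n := n)) := by
  intro p
  apply Subtype.ext
  apply toL_inj
  rw [toL_Phi, toL_Phi]
  exact (phiMain p).2.2.2.2

lemma Phi_des (p : {p : Equiv.Perm (Fin n) // Avoids132 p}) :
    Des (Phi p).1 = revCompl n (Des p.1) := by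
  rw [toL_des, toL_des, toL_Phi]
  ext i
  have := (phiMain p).2.2.2.1 i
  rw [toL_length] at this
  exact this

lemma des_bounds (p : Equiv.Perm (Fin n)) : ∀ i ∈ Des p, 1 ≤ i ∧ i ≤ n - 1 := by
  rintro i ⟨⟨h1, h2⟩, _⟩
  exact ⟨h1, by omega⟩

lemma revCompl_antitone {S T : Set ℕ} (hS : ∀ i ∈ S, 1 ≤ i ∧ i ≤ n - 1)
    (hT : ∀ i ∈ T, 1 ≤ i ∧ i ≤ n - 1) :
    S ⊆ T ↔ revCompl n T ⊆ revCompl n S := by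
  constructor
  · rintro h i ⟨h1, h2, h3⟩
    exact ⟨h1, h2, fun hc => h3 (h hc)⟩
  · intro h j hj
    by_contra hc
    obtain ⟨hj1, hj2⟩ := hS j hj
    have hmem : (n - j) ∈ revCompl n T :=
      ⟨by omega, by omega, by rw [show n - (n - j) = j by omega]; exact hc⟩
    obtain ⟨_, _, h3⟩ := h hmem
    rw [show n - (n - j) = j by omega] at h3
    exact h3 hj

end Stmt6

/-- There is a bijection `φ` of the set of 132-avoiding permutations of `[n]`
onto itself with `Des (φ p) = α (Des p)` for all `p`; in particular the poset
of 132-avoiding permutations ordered by containment of descent sets is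
self-dual: `Des p ⊆ Des q ↔ Des (φ q) ⊆ Des (φ p)`. -/
theorem stmt6 (n : ℕ) (hn : 1 ≤ n) :
    ∃ φ : {p : Equiv.Perm (Fin n) // Avoids132 p} ≃
          {p : Equiv.Perm (Fin n) // Avoids132 p},
      (∀ p, Des (φ p).1 = revCompl n (Des p.1)) ∧
      (∀ p q : {p : Equiv.Perm (Fin n) // Avoids132 p},
        Des p.1 ⊆ Des q.1 ↔ Des (φ q).1 ⊆ Des (φ p).1) := by
  refine ⟨Function.Involutive.toPerm Stmt6.Phi Stmt6.Phi_involutive, fun p => Stmt6.Phi_des p,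
    fun p q => ?_⟩
  have hφp : Des ((Function.Involutive.toPerm Stmt6.Phi Stmt6.Phi_involutive) p).1
      = revCompl n (Des p.1) := Stmt6.Phi_des p
  have hφq : Des ((Function.Involutive.toPerm Stmt6.Phi Stmt6.Phi_involutive) q).1
      = revCompl n (Des q.1) := Stmt6.Phi_des q
  rw [hφp, hφq]
  exact Stmt6.revCompl_antitone (Stmt6.des_bounds p.1) (Stmt6.des_bounds q.1)
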